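/- Let $\mu$ be a finite positive measure on $I = [0,T]$, let $g \in L^1(I,\mu)$ be nonnegative and $\beta \in [0,1)$ such that $\mu(\{t\})g(t) \leq \beta$ for all $t \in I$. Let $\varphi \in L^\infty(I,\mu)$ be nonnegative and satisfy $\varphi(t) \leq \alpha + \int_{(0,t]} g(s)\varphi(s)\,d\mu(s)$ for all $t \in I$, where $\alpha \geq 0$. Then $\varphi(t) \leq \alpha\exp\big(\tfrac{1}{1-\beta}\int_{(0,t]} g(s)\,d\mu(s)\big)$ for all $t \in I$. -/

import Mathlib

open MeasureTheory Filter Set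

lemma gronwall_seq_tendsto (c : ℝ) :
    Tendsto (fun n : ℕ => c / ((n : ℝ) + 1)) atTop (nhds 0) := by
  have h := tendsto_one_div_add_atTop_nhds_zero_nat.const_mul c
  simpa [div_eq_mul_inv, one_div, mul_comm] using h

lemma gronwall_key {δ b : ℝ} (h0 : 0 ≤ δ) (hδb : δ ≤ b) (hb : b < 1) :
    1 ≤ (1 - δ) * Real.exp (δ / (1 - b)) := by
  have h1 : 0 < 1 - δ := by linarith
  have h2 : 0 < 1 - b := by linarith
  have hlog : 1 - (1 - δ)⁻¹ ≤ Real.log (1 - δ) := Real.one_sub_inv_le_log_of_pos h1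
  have he : (1 - δ)⁻¹ - 1 = δ / (1 - δ) := by field_simp; ring
  have h3 : δ / (1 - δ) ≤ δ / (1 - b) := by gcongr
  have h4 : -Real.log (1 - δ) ≤ δ / (1 - b) := by linarith
  have h5 : (1 - δ)⁻¹ ≤ Real.exp (δ / (1 - b)) := by
    rw [← Real.exp_log (inv_pos.2 h1), Real.log_inv]
    exact Real.exp_le_exp.2 h4
  have h6 := mul_le_mul_of_nonneg_left h5 h1.le
  rwa [mul_inv_cancel₀ h1.ne'] at h6

lemma gronwall_antitone_left (b c : ℝ) (hc : 0 ≤ c) :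
    Antitone (fun n : ℕ => Set.Ioc (b - c / ((n : ℝ) + 1)) b) := by
  intro n m hnm
  apply Set.Ioc_subset_Ioc_left
  have h : c / ((m : ℝ) + 1) ≤ c / ((n : ℝ) + 1) := by
    gcongr
  linarith

lemma gronwall_meas_left (ν : Measure ℝ) [IsFiniteMeasure ν] {b c : ℝ} (hc : 0 < c) :
    Tendsto (fun n : ℕ => ν (Set.Ioc (b - c / ((n : ℝ) + 1)) b)) atTop (nhds (ν {b})) := by
  have hiInt : (⋂ n : ℕ, Set.Ioc (b - c / ((n : ℝ) + 1)) b) = {b} := by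
    ext x
    simp only [Set.mem_iInter, Set.mem_Ioc, Set.mem_singleton_iff]
    constructor
    · intro h
      have hxb : x ≤ b := (h 0).2
      have ht : Tendsto (fun n : ℕ => b - c / ((n : ℝ) + 1)) atTop (nhds b) := by
        simpa using tendsto_const_nhds.sub (gronwall_seq_tendsto c)
      have hge : b ≤ x := le_of_tendsto ht (Eventually.of_forall fun n => (h n).1.le)
      exact le_antisymm hxb hge
    · rintro rfl
      intro n
      have : 0 < c / ((n : ℝ) + 1) := by positivity
      exact ⟨by linarith, le_rfl⟩
  have h := tendsto_measure_iInter_atTop (μ := ν)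
    (fun n => measurableSet_Ioc.nullMeasurableSet)
    (gronwall_antitone_left b c hc.le) ⟨0, measure_ne_top ν _⟩
  rw [hiInt] at h
  exact h

lemma gronwall_meas_right (ν : Measure ℝ) [IsFiniteMeasure ν] {a c : ℝ} (hc : 0 < c) :
    Tendsto (fun n : ℕ => ν (Set.Ioc a (a + c / ((n : ℝ) + 1)))) atTop (nhds 0) := by
  have hmono : Antitone (fun n : ℕ => Set.Ioc a (a + c / ((n : ℝ) + 1))) := by
    intro n m hnm
    apply Set.Ioc_subset_Ioc_right
    have h : c / ((m : ℝ) + 1) ≤ c / ((n : ℝ) + 1) := by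
      gcongr
    linarith
  have hiInt : (⋂ n : ℕ, Set.Ioc a (a + c / ((n : ℝ) + 1))) = (∅ : Set ℝ) := by
    ext x
    simp only [Set.mem_iInter, Set.mem_Ioc, Set.mem_empty_iff_false, iff_false]
    intro h
    have hax : a < x := (h 0).1
    have ht : Tendsto (fun n : ℕ => a + c / ((n : ℝ) + 1)) atTop (nhds a) := by
      simpa using tendsto_const_nhds.add (gronwall_seq_tendsto c)
    have : x ≤ a := ge_of_tendsto ht (Eventually.of_forall fun n => (h n).2)
    linarith
  have h := tendsto_measure_iInter_atTop (μ := ν)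
    (fun n => measurableSet_Ioc.nullMeasurableSet)
    hmono ⟨0, measure_ne_top ν _⟩
  rw [hiInt, measure_empty] at h
  exact h
/-- Gronwall lemma for a possibly atomic positive finite measure (Lemma 2.6). -/
theorem gronwall_atomic_measure (T : ℝ) (hT : 0 < T)
    (μ : Measure ℝ) [IsFiniteMeasure μ]
    (g φ : ℝ → ℝ) (hg : Integrable g μ) (hgm : Measurable g) (hφm : Measurable φ)
    (hg0 : ∀ t ∈ Set.Icc 0 T, 0 ≤ g t) (hφ0 : ∀ t ∈ Set.Icc 0 T, 0 ≤ φ t)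
    (β : ℝ) (hβ0 : 0 ≤ β) (hβ1 : β < 1)
    (hatom : ∀ t ∈ Set.Icc 0 T, (μ {t}).toReal * g t ≤ β)
    (hφb : ∃ C : ℝ, ∀ t ∈ Set.Icc 0 T, φ t ≤ C)
    (α : ℝ) (hα : 0 ≤ α)
    (hineq : ∀ t ∈ Set.Icc 0 T, φ t ≤ α + ∫ s in Set.Ioc 0 t, g s * φ s ∂μ) :
    ∀ t ∈ Set.Icc 0 T,
      φ t ≤ α * Real.exp ((1 / (1 - β)) * ∫ s in Set.Ioc 0 t, g s ∂μ) := by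
  classical
  obtain ⟨C, hC⟩ := hφb
  set ν : Measure ℝ := μ.withDensity (fun s => ENNReal.ofReal (g s)) with hν
  haveI hνfin : IsFiniteMeasure ν := by
    constructor
    rw [hν, withDensity_apply _ MeasurableSet.univ, Measure.restrict_univ]
    calc ∫⁻ s, ENNReal.ofReal (g s) ∂μ ≤ ∫⁻ s, (‖g s‖₊ : ENNReal) ∂μ := by
          apply lintegral_mono
          intro s
          show ENNReal.ofReal (g s) ≤ ((‖g s‖₊ : NNReal) : ENNReal)
          rw [← enorm_eq_nnnorm, ← ofReal_norm, Real.norm_eq_abs]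
          exact ENNReal.ofReal_le_ofReal (le_abs_self _)
      _ < ⊤ := hg.hasFiniteIntegral
  -- link between real integrals of g and ν
  have hkey : ∀ a b : ℝ, 0 ≤ a → b ≤ T →
      ∫ s in Set.Ioc a b, g s ∂μ = (ν (Set.Ioc a b)).toReal := by
    intro a b ha hb
    have hpos : 0 ≤ᵐ[μ.restrict (Set.Ioc a b)] g := by
      refine (ae_restrict_iff' measurableSet_Ioc).2 (Eventually.of_forall fun r hr => ?_)
      exact hg0 r ⟨le_trans ha hr.1.le, hr.2.trans hb⟩
    rw [integral_eq_lintegral_of_nonneg_ae hpos hgm.aestronglyMeasurable.restrict,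
      hν, withDensity_apply _ measurableSet_Ioc]
  -- singleton masses are at most β
  have hsingle : ∀ x ∈ Set.Icc 0 T, ν {x} ≤ ENNReal.ofReal β := by
    intro x hx
    rw [hν, withDensity_apply _ (measurableSet_singleton x), lintegral_singleton]
    have hne : ENNReal.ofReal (g x) * μ {x} ≠ ⊤ :=
      ENNReal.mul_ne_top ENNReal.ofReal_ne_top (measure_ne_top μ _)
    rw [ENNReal.le_ofReal_iff_toReal_le hne hβ0, ENNReal.toReal_mul,
      ENNReal.toReal_ofReal (hg0 x hx), mul_comm]
    exact hatom x hx
  -- disjointness and additivity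
  have hdisj : ∀ a b c : ℝ, Disjoint (Set.Ioc a b) (Set.Ioc b c) :=
    fun a b c => Set.disjoint_left.2 fun x hx hx' => absurd hx'.1 (not_lt.2 hx.2)
  have hadd : ∀ a b c : ℝ, a ≤ b → b ≤ c →
      (ν (Set.Ioc a c)).toReal = (ν (Set.Ioc a b)).toReal + (ν (Set.Ioc b c)).toReal := by
    intro a b c hab hbc
    rw [← ENNReal.toReal_add (measure_ne_top ν _) (measure_ne_top ν _),
      ← measure_union (hdisj a b c) measurableSet_Ioc, Set.Ioc_union_Ioc_eq_Ioc hab hbc]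
  -- the function W
  set W : ℝ → ℝ := fun u => α + ∫ s in Set.Ioc 0 u, g s * φ s ∂μ with hWdef
  have hWeq : ∀ u, W u = α + ∫ s in Set.Ioc 0 u, g s * φ s ∂μ := fun u => rfl
  have hφW : ∀ r ∈ Set.Icc 0 T, φ r ≤ W r := fun r hr => by
    rw [hWeq]; exact hineq r hr
  -- integrability of g * φ on subintervals
  have hint : ∀ a b : ℝ, 0 ≤ a → b ≤ T →
      IntegrableOn (fun r => g r * φ r) (Set.Ioc a b) μ := by
    intro a b ha hb
    refine Integrable.mono' ((hg.integrableOn).const_mul (max C 0))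
      ((hgm.mul hφm).aestronglyMeasurable.restrict) ?_
    refine (ae_restrict_iff' measurableSet_Ioc).2 (Eventually.of_forall fun r hr => ?_)
    have hrI : r ∈ Set.Icc 0 T := ⟨le_trans ha hr.1.le, hr.2.trans hb⟩
    have hgr : 0 ≤ g r := hg0 r hrI
    rw [Real.norm_eq_abs, abs_mul, abs_of_nonneg hgr]
    calc g r * |φ r| ≤ g r * max C 0 := by
          refine mul_le_mul_of_nonneg_left ?_ hgr
          rw [abs_of_nonneg (hφ0 r hrI)]
          exact le_trans (hC r hrI) (le_max_left _ _)
      _ = max C 0 * g r := mul_comm _ _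
  -- splitting of W
  have hWsplit : ∀ a b : ℝ, 0 ≤ a → a ≤ b → b ≤ T →
      W b = W a + ∫ s in Set.Ioc a b, g s * φ s ∂μ := by
    intro a b ha hab hb
    rw [hWeq, hWeq, ← Set.Ioc_union_Ioc_eq_Ioc ha hab,
      setIntegral_union (hdisj 0 a b) measurableSet_Ioc
        (hint 0 a le_rfl (hab.trans hb)) (hint a b ha hb), add_assoc]
  have hWpos : ∀ a b : ℝ, 0 ≤ a → a ≤ b → b ≤ T →
      0 ≤ ∫ s in Set.Ioc a b, g s * φ s ∂μ := by
    intro a b ha hab hb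
    refine setIntegral_nonneg measurableSet_Ioc fun r hr => ?_
    have hrI : r ∈ Set.Icc 0 T := ⟨le_trans ha hr.1.le, hr.2.trans hb⟩
    exact mul_nonneg (hg0 r hrI) (hφ0 r hrI)
  have hWmono : ∀ a b : ℝ, 0 ≤ a → a ≤ b → b ≤ T → W a ≤ W b := by
    intro a b ha hab hb
    rw [hWsplit a b ha hab hb]
    linarith [hWpos a b ha hab hb]
  have hW0 : W 0 = α := by
    rw [hWeq]; simp
  have hWα : ∀ b : ℝ, 0 ≤ b → b ≤ T → α ≤ W b := by
    intro b hb hbT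
    have := hWmono 0 b le_rfl hb hbT
    linarith [hW0]
  -- the basic step inequality
  have hstep : ∀ a b : ℝ, 0 ≤ a → a ≤ b → b ≤ T →
      W b ≤ W a + W b * (ν (Set.Ioc a b)).toReal := by
    intro a b ha hab hb
    have hsplit := hWsplit a b ha hab hb
    have h1 : ∫ s in Set.Ioc a b, g s * φ s ∂μ ≤ ∫ s in Set.Ioc a b, g s * W b ∂μ := by
      refine setIntegral_mono_on (hint a b ha hb) ((hg.integrableOn).mul_const _)
        measurableSet_Ioc fun r hr => ?_
      have hrI : r ∈ Set.Icc 0 T := ⟨le_trans ha hr.1.le, hr.2.trans hb⟩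
      have hφr : φ r ≤ W b := le_trans (hφW r hrI) (hWmono r b hrI.1 hr.2 hb)
      exact mul_le_mul_of_nonneg_left hφr (hg0 r hrI)
    have h2 : ∫ s in Set.Ioc a b, g s * W b ∂μ = W b * (ν (Set.Ioc a b)).toReal := by
      rw [integral_mul_const, hkey a b ha hb, mul_comm]
    linarith [h1, h2, hsplit]
  -- the solved one-interval estimate
  have hsolve : ∀ ε : ℝ, 0 < ε → β + ε < 1 → ∀ a b : ℝ, 0 ≤ a → a ≤ b → b ≤ T →
      (ν (Set.Ioc a b)).toReal ≤ β + ε →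
      W b ≤ W a * Real.exp ((ν (Set.Ioc a b)).toReal / (1 - (β + ε))) := by
    intro ε hε hβε a b ha hab hb hδ
    set δ := (ν (Set.Ioc a b)).toReal with hδdef
    have hδ0 : 0 ≤ δ := ENNReal.toReal_nonneg
    have key := gronwall_key hδ0 hδ hβε
    have h1 : W b * (1 - δ) ≤ W a := by
      have := hstep a b ha hab hb
      nlinarith
    have hWB0 : 0 ≤ W b := le_trans hα (hWα b (ha.trans hab) hb)
    have hE : (0:ℝ) < Real.exp (δ / (1 - (β + ε))) := Real.exp_pos _
    nlinarith [mul_le_mul_of_nonneg_right h1 hE.le,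
      mul_le_mul_of_nonneg_left key hWB0]
  -- the main induction
  have main : ∀ ε : ℝ, 0 < ε → β + ε < 1 → ∀ n : ℕ, ∀ u : ℝ, u ∈ Set.Icc 0 T →
      (ν (Set.Ioc 0 u)).toReal ≤ β + n * ε →
      W u ≤ α * Real.exp ((ν (Set.Ioc 0 u)).toReal / (1 - (β + ε))) := by
    intro ε hε hβε n
    induction n with
    | zero =>
      intro u hu hGu
      have hGu' : (ν (Set.Ioc 0 u)).toReal ≤ β + ε := by
        push_cast at hGu; linarith
      have h := hsolve ε hε hβε 0 u le_rfl hu.1 hu.2 hGu'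
      rwa [hW0] at h
    | succ n ih =>
      intro u hu hGu
      by_cases hcase : (ν (Set.Ioc 0 u)).toReal ≤ β + n * ε
      · exact ih u hu hcase
      push_neg at hcase
      have hu0 : 0 < u := by
        rcases eq_or_lt_of_le hu.1 with h0 | h0
        · exfalso
          rw [← h0] at hcase
          simp only [Set.Ioc_self, measure_empty, ENNReal.toReal_zero] at hcase
          have : 0 ≤ (n : ℝ) * ε := by positivity
          linarith
        · exact h0
      -- the set B and its infimum
      set B := {s : ℝ | s ∈ Set.Icc 0 u ∧ (ν (Set.Ioc s u)).toReal ≤ β + ε} with hB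
      have hBmem : ∃ s ∈ B, s < u := by
        have hνu : ν {u} < ENNReal.ofReal (β + ε) := by
          refine lt_of_le_of_lt (hsingle u hu) ?_
          exact ENNReal.ofReal_lt_ofReal_iff (by linarith) |>.2 (by linarith)
        obtain ⟨m, hm⟩ := ((gronwall_meas_left ν hu0 (b := u)).eventually_lt_const hνu).exists
        have hmnn : (0:ℝ) ≤ (m : ℝ) := Nat.cast_nonneg m
        have hdivpos : 0 < u / ((m : ℝ) + 1) := div_pos hu0 (by linarith)
        have hdivle : u / ((m : ℝ) + 1) ≤ u := div_le_self hu0.le (by linarith)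
        refine ⟨u - u / ((m : ℝ) + 1), ⟨⟨by linarith, by linarith⟩, ?_⟩, by linarith⟩
        exact ENNReal.toReal_le_of_le_ofReal (by linarith) hm.le
      obtain ⟨sB, hsB, hsBlt⟩ := hBmem
      have hBne : B.Nonempty := ⟨sB, hsB⟩
      have hBbdd : BddBelow B := ⟨0, fun s hs => hs.1.1⟩
      set s₀ := sInf B with hs₀def
      have hs₀0 : 0 ≤ s₀ := le_csInf hBne fun s hs => hs.1.1
      have hs₀lt : s₀ < u := lt_of_le_of_lt (csInf_le hBbdd hsB) hsBlt
      -- (iii) : ν (Ioc s₀ u) ≤ β + ε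
      have hδle : (ν (Set.Ioc s₀ u)).toReal ≤ β + ε := by
        have hstep3 : ∀ w : ℝ, s₀ < w →
            ν (Set.Ioc s₀ u) ≤ ENNReal.ofReal (β + ε) + ν (Set.Ioc s₀ w) := by
          intro w hw
          obtain ⟨s, hsBmem, hsw⟩ := exists_lt_of_csInf_lt hBne hw
          have hs₀s : s₀ ≤ s := csInf_le hBbdd hsBmem
          have hsplit : ν (Set.Ioc s₀ u) = ν (Set.Ioc s₀ s) + ν (Set.Ioc s u) := by
            rw [← measure_union (hdisj s₀ s u) measurableSet_Ioc,
              Set.Ioc_union_Ioc_eq_Ioc hs₀s hsBmem.1.2]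
          rw [hsplit, add_comm]
          refine add_le_add ?_ (measure_mono (Set.Ioc_subset_Ioc_right hsw.le))
          exact (ENNReal.le_ofReal_iff_toReal_le (measure_ne_top ν _) (by linarith)).2 hsBmem.2
        have hlim := gronwall_meas_right ν (a := s₀) (c := u - s₀) (by linarith)
        have htt : Tendsto
            (fun m : ℕ => ENNReal.ofReal (β + ε) + ν (Set.Ioc s₀ (s₀ + (u - s₀) / ((m : ℝ) + 1))))
            atTop (nhds (ENNReal.ofReal (β + ε) + 0)) := tendsto_const_nhds.add hlim
        have hle : ν (Set.Ioc s₀ u) ≤ ENNReal.ofReal (β + ε) + 0 := by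
          refine ge_of_tendsto htt (Eventually.of_forall fun m => ?_)
          refine hstep3 _ ?_
          have hmnn : (0:ℝ) ≤ (m : ℝ) := Nat.cast_nonneg m
          have : (0:ℝ) < (u - s₀) / ((m : ℝ) + 1) :=
            div_pos (by linarith) (by linarith)
          linarith
        rw [add_zero] at hle
        exact ENNReal.toReal_le_of_le_ofReal (by linarith) hle
      -- (iv) : ν (Ioc 0 s₀) ≤ β + n ε
      have hGs₀ : (ν (Set.Ioc 0 s₀)).toReal ≤ β + n * ε := by
        rcases eq_or_lt_of_le hs₀0 with h0 | h0
        · rw [← h0]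
          simp only [Set.Ioc_self, measure_empty, ENNReal.toReal_zero]
          positivity
        · have hδge : ε ≤ (ν (Set.Ioc s₀ u)).toReal := by
            by_contra hcon
            push_neg at hcon
            set θ := ε - (ν (Set.Ioc s₀ u)).toReal with hθdef
            have hθpos : 0 < θ := by linarith
            have hνs₀ : ν {s₀} < ENNReal.ofReal (β + θ) := by
              refine lt_of_le_of_lt (hsingle s₀ ⟨hs₀0, le_trans hs₀lt.le hu.2⟩) ?_
              exact ENNReal.ofReal_lt_ofReal_iff (by linarith) |>.2 (by linarith)
            obtain ⟨m, hm⟩ :=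
              ((gronwall_meas_left ν h0 (b := s₀)).eventually_lt_const hνs₀).exists
            set s := s₀ - s₀ / ((m : ℝ) + 1) with hsdef
            have hmnn : (0:ℝ) ≤ (m : ℝ) := Nat.cast_nonneg m
            have hdivpos : 0 < s₀ / ((m : ℝ) + 1) := div_pos h0 (by linarith)
            have hdivle : s₀ / ((m : ℝ) + 1) ≤ s₀ := div_le_self hs₀0 (by linarith)
            have hss₀ : s < s₀ := by rw [hsdef]; linarith
            have hs0 : 0 ≤ s := by rw [hsdef]; linarith
            have hsnB : s ∉ B := fun hmem => absurd (csInf_le hBbdd hmem) (not_le.2 hss₀)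
            have hgt : β + ε < (ν (Set.Ioc s u)).toReal := by
              by_contra h'
              push_neg at h'
              exact hsnB ⟨⟨hs0, le_trans hss₀.le hs₀lt.le⟩, h'⟩
            have hadd' := hadd s s₀ u hss₀.le hs₀lt.le
            have h1 : (ν (Set.Ioc s s₀)).toReal ≤ β + θ :=
              ENNReal.toReal_le_of_le_ofReal (by linarith) hm.le
            rw [hθdef] at h1
            linarith
          have hGadd := hadd 0 s₀ u hs₀0 hs₀lt.le
          push_cast at hGu
          linarith
      -- combine
      have hIH := ih s₀ ⟨hs₀0, le_trans hs₀lt.le hu.2⟩ hGs₀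
      have hsol := hsolve ε hε hβε s₀ u hs₀0 hs₀lt.le hu.2 hδle
      have hGadd := hadd 0 s₀ u hs₀0 hs₀lt.le
      calc W u ≤ W s₀ * Real.exp ((ν (Set.Ioc s₀ u)).toReal / (1 - (β + ε))) := hsol
        _ ≤ (α * Real.exp ((ν (Set.Ioc 0 s₀)).toReal / (1 - (β + ε)))) *
              Real.exp ((ν (Set.Ioc s₀ u)).toReal / (1 - (β + ε))) :=
            mul_le_mul_of_nonneg_right hIH (Real.exp_pos _).le
        _ = α * Real.exp ((ν (Set.Ioc 0 u)).toReal / (1 - (β + ε))) := by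
            rw [mul_assoc, ← Real.exp_add, ← add_div, ← hGadd]
  -- conclusion
  intro t ht
  have hG := hkey 0 t le_rfl ht.2
  have hβ1' : (0:ℝ) < 1 - β := by linarith
  set Gt := (ν (Set.Ioc 0 t)).toReal with hGt
  have hGt0 : 0 ≤ Gt := ENNReal.toReal_nonneg
  have hbound : ∀ ε ∈ Set.Ioo (0:ℝ) (1 - β), W t ≤ α * Real.exp (Gt / (1 - (β + ε))) := by
    intro ε hε
    obtain ⟨n, hn⟩ := exists_nat_ge (Gt / ε)
    refine main ε hε.1 (by linarith [hε.2]) n t ht ?_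
    have h1 : Gt ≤ n * ε := by
      rw [div_le_iff₀ hε.1] at hn
      linarith
    linarith
  have hcontAt : ContinuousAt (fun ε : ℝ => α * Real.exp (Gt / (1 - (β + ε)))) 0 := by
    have hc : ContinuousAt (fun ε : ℝ => 1 - (β + ε)) 0 := by fun_prop
    have hne : (fun ε : ℝ => 1 - (β + ε)) 0 ≠ 0 := by
      simp only [add_zero]
      linarith
    have hdiv : ContinuousAt (fun ε : ℝ => Gt / (1 - (β + ε))) 0 :=
      ContinuousAt.div continuousAt_const hc hne
    exact (Real.continuous_exp.continuousAt.comp hdiv).const_mul α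
  have hcont : Tendsto (fun ε : ℝ => α * Real.exp (Gt / (1 - (β + ε))))
      (nhdsWithin 0 (Set.Ioi 0)) (nhds (α * Real.exp (Gt / (1 - β)))) := by
    have h : Tendsto (fun ε : ℝ => α * Real.exp (Gt / (1 - (β + ε))))
        (nhdsWithin 0 (Set.Ioi 0)) (nhds (α * Real.exp (Gt / (1 - (β + 0))))) :=
      hcontAt.tendsto.mono_left nhdsWithin_le_nhds
    simpa using h
  have hfinal : W t ≤ α * Real.exp (Gt / (1 - β)) := by
    refine ge_of_tendsto hcont ?_
    filter_upwards [Ioo_mem_nhdsGT hβ1'] with ε hε using hbound ε hε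
  calc φ t ≤ W t := hφW t ht
    _ ≤ α * Real.exp (Gt / (1 - β)) := hfinal
    _ = α * Real.exp ((1 / (1 - β)) * ∫ s in Set.Ioc 0 t, g s ∂μ) := by
        rw [hG, one_div_mul_eq_div]
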